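/- Let K ⊆ L be finite fields, C ⊆ L^m a K-linear code with generator matrix A giving column spaces (V_1,...,V_m), and f : C → L^m a K-linear map with induced matrix A' giving column spaces (U_1,...,U_m). Then f is an isometry (preserves Hamming weight) if and only if ∑_{i=1}^m (1/|V_i|)·1_{V_i} = ∑_{i=1}^m (1/|U_i|)·1_{U_i} as functions on K^k, where k = dim_K C. -/

import Mathlib

open Finset LinearMap
set_option linter.unusedSectionVars false
open scoped Classical

noncomputable def dotB (K : Type*) [Field K] (k : ℕ) : LinearMap.BilinForm K (Fin k → K) :=
  LinearMap.mk₂ K (fun x y => ∑ i, x i * y i)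
    (by intros; simp [add_mul, Finset.sum_add_distrib])
    (by intros; simp [Finset.mul_sum, mul_assoc])
    (by intros; simp [mul_add, Finset.sum_add_distrib])
    (by intros; simp [Finset.mul_sum]; ring_nf; simp [mul_assoc, mul_comm, mul_left_comm])

section DotB

variable {K : Type*} [Field K] [Fintype K] {k : ℕ}

lemma dotB_symm (x y : Fin k → K) : dotB K k x y = dotB K k y x := by
  simp [dotB, mul_comm]

lemma dotB_refl : (dotB K k).IsRefl := fun x y h => by rwa [dotB_symm]

lemma dotB_nondegenerate : (dotB K k).Nondegenerate := by
  refine (LinearMap.IsRefl.nondegenerate_iff_separatingLeft (dotB_refl : LinearMap.IsRefl (dotB K k))).mpr ?_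
  intro x hx
  funext i
  have := hx (Pi.single i 1)
  simpa [dotB, Pi.single_apply, Finset.sum_ite_eq'] using this

lemma orth_orth (W : Submodule K (Fin k → K)) :
    (dotB K k).orthogonal ((dotB K k).orthogonal W) = W :=
  LinearMap.BilinForm.orthogonal_orthogonal dotB_nondegenerate dotB_refl W

/-- key counting lemma -/
lemma count_key (W : Submodule K (Fin k → K)) (w : Fin k → K) :
    Fintype.card K * (univ.filter (fun x : Fin k → K =>
        x ∈ W ∧ dotB K k x w = 0)).card
      = Nat.card W * (if w ∈ (dotB K k).orthogonal W then Fintype.card K else 1) := by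
  classical
  by_cases hw : w ∈ (dotB K k).orthogonal W
  · rw [if_pos hw]
    have : (univ.filter (fun x : Fin k → K => x ∈ W ∧ dotB K k x w = 0)).card
        = (univ.filter (fun x : Fin k → K => x ∈ W)).card := by
      congr 1
      apply Finset.filter_congr
      intro x _
      simp only [and_iff_left_iff_imp]
      exact fun hx => hw x hx
    rw [this, Nat.card_eq_fintype_card, Fintype.card_subtype]
    ring
  · rw [if_neg hw, mul_one]
    set φ : W →ₗ[K] K := ((dotB K k).flip w).domRestrict W with hφ
    have hsurj : Function.Surjective φ := by
      obtain ⟨x₀, hx₀W, hx₀⟩ : ∃ x₀ ∈ W, dotB K k x₀ w ≠ 0 := by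
        by_contra h
        push_neg at h
        exact hw fun n hn => h n hn
      intro y
      refine ⟨(y * (dotB K k x₀ w)⁻¹) • ⟨x₀, hx₀W⟩, ?_⟩
      simp only [hφ, map_smul, smul_eq_mul]
      have : φ ⟨x₀, hx₀W⟩ = dotB K k x₀ w := rfl
      rw [hφ] at this
      simp only [LinearMap.domRestrict_apply, LinearMap.flip_apply] at *
      field_simp
      exact congrArg (y * ·) this
    have hker : (univ.filter (fun x : Fin k → K => x ∈ W ∧ dotB K k x w = 0)).card
        = Fintype.card (LinearMap.ker φ) := by
      rw [← Fintype.card_subtype]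
      apply Fintype.card_congr
      refine ⟨fun x => ⟨⟨x.1, x.2.1⟩, ?_⟩, fun y => ⟨y.1.1, y.1.2, ?_⟩, fun x => rfl, fun y => rfl⟩
      · simpa [hφ, LinearMap.mem_ker] using x.2.2
      · have h := y.2
        rw [LinearMap.mem_ker] at h
        exact h
    rw [hker, Nat.card_eq_fintype_card]
    have h1 : Fintype.card (W ⧸ LinearMap.ker φ) = Fintype.card K :=
      Fintype.card_congr (φ.quotKerEquivOfSurjective hsurj).toEquiv
    have h2 : Nat.card W = Nat.card (LinearMap.ker φ) * Nat.card (W ⧸ LinearMap.ker φ) :=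
      Submodule.card_eq_card_quotient_mul_card _
    rw [Nat.card_eq_fintype_card, Nat.card_eq_fintype_card, Nat.card_eq_fintype_card] at h2
    rw [h2, h1]
    ring

lemma card_mul_card_orthogonal (W : Submodule K (Fin k → K)) :
    Nat.card W * Nat.card ((dotB K k).orthogonal W) = Fintype.card K ^ k := by
  have h1 : Module.finrank K ((dotB K k).orthogonal W)
      = Module.finrank K (Fin k → K) - Module.finrank K W :=
    LinearMap.BilinForm.finrank_orthogonal dotB_nondegenerate W
  have hle : Module.finrank K W ≤ Module.finrank K (Fin k → K) :=
    Submodule.finrank_le W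
  rw [Nat.card_eq_fintype_card, Nat.card_eq_fintype_card,
    Module.card_eq_pow_finrank (K := K) (V := W),
    Module.card_eq_pow_finrank (K := K) (V := ((dotB K k).orthogonal W)),
    ← pow_add, h1]
  congr 1
  have : Module.finrank K (Fin k → K) = k := by simp
  omega

lemma count_key_real (W : Submodule K (Fin k → K)) (w : Fin k → K) :
    (Fintype.card K : ℝ) * ∑ x : Fin k → K,
        (if dotB K k x w = 0 then Set.indicator (W : Set (Fin k → K)) 1 x else 0)
      = (Nat.card W : ℝ) * (1 + ((Fintype.card K : ℝ) - 1) *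
          Set.indicator (((dotB K k).orthogonal W : Submodule K (Fin k → K)) : Set (Fin k → K)) 1 w) := by
  have hsum : ∑ x : Fin k → K,
        (if dotB K k x w = 0 then Set.indicator (W : Set (Fin k → K)) 1 x else 0)
      = ((univ.filter (fun x : Fin k → K => x ∈ W ∧ dotB K k x w = 0)).card : ℝ) := by
    rw [Finset.card_filter, Nat.cast_sum]
    apply Finset.sum_congr rfl
    intro x _
    by_cases h1 : dotB K k x w = 0 <;> by_cases h2 : x ∈ W <;>
      simp [h1, h2, Set.indicator_apply]
  rw [hsum]
  have h := count_key W w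
  by_cases hw : w ∈ (dotB K k).orthogonal W
  · rw [if_pos hw] at h
    have := congrArg (fun n : ℕ => (n : ℝ)) h
    push_cast at this
    rw [Set.indicator_of_mem (by exact hw) 1]
    simp only [Pi.one_apply]
    rw [this]
    ring
  · rw [if_neg hw] at h
    have := congrArg (fun n : ℕ => (n : ℝ)) h
    push_cast at this
    rw [Set.indicator_of_notMem (by exact hw) 1]
    rw [this]
    ring

variable {m : ℕ}

noncomputable def Sfun (V : Fin m → Submodule K (Fin k → K)) (w : Fin k → K) : ℝ :=
  ∑ j : Fin m, (Nat.card (V j) : ℝ)⁻¹ * Set.indicator (V j : Set (Fin k → K)) 1 w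

noncomputable def Pfun (V : Fin m → Submodule K (Fin k → K)) (w : Fin k → K) : ℝ :=
  ∑ j : Fin m, Set.indicator
    (((dotB K k).orthogonal (V j) : Submodule K (Fin k → K)) : Set (Fin k → K)) 1 w

lemma identity_I (V : Fin m → Submodule K (Fin k → K)) (w : Fin k → K) :
    (Fintype.card K : ℝ) * ∑ x : Fin k → K, (if dotB K k x w = 0 then Sfun V x else 0)
      = m + ((Fintype.card K : ℝ) - 1) * Pfun V w := by
  have hswap : ∑ x : Fin k → K, (if dotB K k x w = 0 then Sfun V x else 0)
      = ∑ j : Fin m, (Nat.card (V j) : ℝ)⁻¹ *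
          ∑ x : Fin k → K, (if dotB K k x w = 0 then Set.indicator (V j : Set (Fin k → K)) 1 x else 0) := by
    have h1 : ∀ x : Fin k → K, (if dotB K k x w = 0 then Sfun V x else 0)
        = ∑ j : Fin m, (if dotB K k x w = 0
            then (Nat.card (V j) : ℝ)⁻¹ * Set.indicator (V j : Set (Fin k → K)) 1 x else 0) := by
      intro x
      unfold Sfun
      split <;> simp
    rw [Finset.sum_congr rfl (fun x _ => h1 x), Finset.sum_comm]
    apply Finset.sum_congr rfl
    intro j _
    rw [Finset.mul_sum]
    apply Finset.sum_congr rfl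
    intro x _
    by_cases h : dotB K k x w = 0 <;> simp [h]
  rw [hswap, Finset.mul_sum]
  have hterm : ∀ j : Fin m,
      (Fintype.card K : ℝ) * ((Nat.card (V j) : ℝ)⁻¹ *
        ∑ x : Fin k → K, (if dotB K k x w = 0 then Set.indicator (V j : Set (Fin k → K)) 1 x else 0))
      = 1 + ((Fintype.card K : ℝ) - 1) *
          Set.indicator (((dotB K k).orthogonal (V j) : Submodule K (Fin k → K)) : Set (Fin k → K)) 1 w := by
    intro j
    have hc : (Nat.card (V j) : ℝ) ≠ 0 := by
      have : 0 < Nat.card (V j) := Nat.card_pos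
      positivity
    have hck := count_key_real (V j) w
    calc (Fintype.card K : ℝ) * ((Nat.card (V j) : ℝ)⁻¹ *
          ∑ x : Fin k → K, (if dotB K k x w = 0 then Set.indicator (V j : Set (Fin k → K)) 1 x else 0))
        = (Nat.card (V j) : ℝ)⁻¹ * ((Fintype.card K : ℝ) *
          ∑ x : Fin k → K, (if dotB K k x w = 0 then Set.indicator (V j : Set (Fin k → K)) 1 x else 0)) := by
          ring
      _ = (Nat.card (V j) : ℝ)⁻¹ * ((Nat.card (V j) : ℝ) * (1 + ((Fintype.card K : ℝ) - 1) *
          Set.indicator (((dotB K k).orthogonal (V j) : Submodule K (Fin k → K)) : Set (Fin k → K)) 1 w)) := by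
          rw [hck]
      _ = _ := by field_simp
  rw [Finset.sum_congr rfl (fun j _ => hterm j)]
  unfold Pfun
  rw [Finset.sum_add_distrib, Finset.mul_sum]
  simp [Finset.card_univ]

lemma card_orth_real (W : Submodule K (Fin k → K)) :
    (Nat.card ((dotB K k).orthogonal W) : ℝ)
      = (Fintype.card K : ℝ) ^ k * (Nat.card W : ℝ)⁻¹ := by
  have h := card_mul_card_orthogonal W
  have hc : (Nat.card W : ℝ) ≠ 0 := by
    have : 0 < Nat.card W := Nat.card_pos
    positivity
  have hcast : (Nat.card W : ℝ) * (Nat.card ((dotB K k).orthogonal W) : ℝ)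
      = (Fintype.card K : ℝ) ^ k := by exact_mod_cast h
  rw [inv_eq_one_div, mul_one_div, eq_div_iff hc, mul_comm]
  exact hcast

lemma identity_II (V : Fin m → Submodule K (Fin k → K)) (w : Fin k → K) :
    (Fintype.card K : ℝ) * ∑ x : Fin k → K, (if dotB K k x w = 0 then Pfun V x else 0)
      = (Fintype.card K : ℝ) ^ k * (Sfun V 0 + ((Fintype.card K : ℝ) - 1) * Sfun V w) := by
  have hswap : ∑ x : Fin k → K, (if dotB K k x w = 0 then Pfun V x else 0)
      = ∑ j : Fin m, ∑ x : Fin k → K, (if dotB K k x w = 0 then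
          Set.indicator (((dotB K k).orthogonal (V j) : Submodule K (Fin k → K)) : Set (Fin k → K)) 1 x else 0) := by
    have h1 : ∀ x : Fin k → K, (if dotB K k x w = 0 then Pfun V x else 0)
        = ∑ j : Fin m, (if dotB K k x w = 0 then
            Set.indicator (((dotB K k).orthogonal (V j) : Submodule K (Fin k → K)) : Set (Fin k → K)) 1 x else 0) := by
      intro x
      unfold Pfun
      split <;> simp
    rw [Finset.sum_congr rfl (fun x _ => h1 x), Finset.sum_comm]
  rw [hswap, Finset.mul_sum]
  have hterm : ∀ j : Fin m,
      (Fintype.card K : ℝ) * ∑ x : Fin k → K, (if dotB K k x w = 0 then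
          Set.indicator (((dotB K k).orthogonal (V j) : Submodule K (Fin k → K)) : Set (Fin k → K)) 1 x else 0)
      = (Fintype.card K : ℝ) ^ k * ((Nat.card (V j) : ℝ)⁻¹ * (1 + ((Fintype.card K : ℝ) - 1) *
          Set.indicator ((V j : Submodule K (Fin k → K)) : Set (Fin k → K)) 1 w)) := by
    intro j
    have hck := count_key_real ((dotB K k).orthogonal (V j)) w
    rw [orth_orth, card_orth_real] at hck
    rw [hck]
    ring
  rw [Finset.sum_congr rfl (fun j _ => hterm j), ← Finset.mul_sum]
  congr 1
  unfold Sfun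
  have h0 : ∀ j : Fin m, Set.indicator ((V j : Submodule K (Fin k → K)) : Set (Fin k → K)) 1 (0 : Fin k → K) = 1 :=
    fun j => Set.indicator_of_mem (Submodule.zero_mem _) 1
  rw [Finset.mul_sum, ← Finset.sum_add_distrib]
  apply Finset.sum_congr rfl
  intro j _
  rw [Set.indicator_of_mem (a := (0 : Fin k → K))
    (Submodule.zero_mem (V j)) (1 : (Fin k → K) → ℝ)]
  simp only [Pi.one_apply]
  ring

lemma main_equiv (V U : Fin m → Submodule K (Fin k → K)) :
    (∀ w, Pfun V w = Pfun U w) ↔ (∀ w, Sfun V w = Sfun U w) := by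
  have hq : (1 : ℝ) < (Fintype.card K : ℝ) := by
    exact_mod_cast Fintype.one_lt_card
  have hd : ((Fintype.card K : ℝ) - 1) ≠ 0 := by linarith
  have hqk : ((Fintype.card K : ℝ)) ^ k ≠ 0 := by positivity
  have hq0 : (Fintype.card K : ℝ) ≠ 0 := by linarith
  constructor
  · intro h
    have key : ∀ w, Sfun V 0 + ((Fintype.card K : ℝ) - 1) * Sfun V w
        = Sfun U 0 + ((Fintype.card K : ℝ) - 1) * Sfun U w := by
      intro w
      apply mul_left_cancel₀ hqk
      rw [← identity_II V w, ← identity_II U w]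
      congr 1
      apply Finset.sum_congr rfl
      intro x _
      rw [h x]
    have h0 : Sfun V 0 = Sfun U 0 := by
      have := key 0
      apply mul_left_cancel₀ hq0
      nlinarith [this]
    intro w
    have := key w
    rw [h0] at this
    apply mul_left_cancel₀ hd
    linarith
  · intro h w
    apply mul_left_cancel₀ hd
    have h1 := identity_I V w
    have h2 := identity_I U w
    have he : ∑ x : Fin k → K, (if dotB K k x w = 0 then Sfun V x else 0)
        = ∑ x : Fin k → K, (if dotB K k x w = 0 then Sfun U x else 0) := by
      apply Finset.sum_congr rfl
      intro x _
      rw [h x]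
    rw [he] at h1
    linarith

end DotB

section Code

variable {K L : Type*} [Field K] [Fintype K] [Field L] [Fintype L] [Algebra K L]
  {n k m : ℕ} (b : Module.Basis (Fin n) K L)

lemma mem_orth_span {k : ℕ} {S : Set (Fin k → K)} {w : Fin k → K} :
    w ∈ (dotB K k).orthogonal (Submodule.span K S) ↔ ∀ s ∈ S, dotB K k s w = 0 := by
  constructor
  · intro h s hs
    exact h s (Submodule.subset_span hs)
  · intro h x hx
    have hle : Submodule.span K S ≤ LinearMap.ker ((dotB K k).flip w) :=
      Submodule.span_le.mpr fun s hs => by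
        simp only [SetLike.mem_coe, LinearMap.mem_ker, LinearMap.flip_apply]
        exact h s hs
    have := hle hx
    rw [LinearMap.mem_ker] at this
    exact this

lemma zero_iff_mem_orth (M : Fin k → (Fin m → L)) (j : Fin m) (w : Fin k → K) :
    (∑ i, w i • M i) j = 0 ↔
      w ∈ (dotB K k).orthogonal (Submodule.span K
        (Set.range fun t : Fin n => fun i : Fin k => b.repr (M i j) t)) := by
  rw [mem_orth_span]
  simp only [Set.forall_mem_range]
  have hj : (∑ i, w i • M i) j = ∑ i, w i • M i j := by
    simp [Finset.sum_apply]
  rw [hj]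
  have hrepr : ∀ t : Fin n, b.repr (∑ i, w i • M i j) t = ∑ i, w i * b.repr (M i j) t := by
    intro t
    rw [map_sum]
    simp [Finsupp.finset_sum_apply]
  constructor
  · intro h t
    have : b.repr (∑ i, w i • M i j) t = 0 := by rw [h]; simp
    rw [hrepr t] at this
    rw [show dotB K k (fun i : Fin k => b.repr (M i j) t) w
        = ∑ i, b.repr (M i j) t * w i from rfl]
    rw [← this]
    exact Finset.sum_congr rfl fun i _ => mul_comm _ _
  · intro h
    have hz : b.repr (∑ i, w i • M i j) = 0 := by
      ext t
      rw [hrepr t]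
      simp only [Finsupp.coe_zero, Pi.zero_apply]
      have ht := h t
      rw [show dotB K k (fun i : Fin k => b.repr (M i j) t) w
          = ∑ i, b.repr (M i j) t * w i from rfl] at ht
      calc ∑ i, w i * b.repr (M i j) t = ∑ i, b.repr (M i j) t * w i :=
            Finset.sum_congr rfl fun i _ => mul_comm _ _
        _ = 0 := ht
    have := congrArg b.repr.symm hz
    simpa using this

end Code

theorem stmt_16 (K L : Type*) [Field K] [Fintype K] [Field L] [Fintype L]
    [Algebra K L] [DecidableEq L]
    (n : ℕ) (b : Module.Basis (Fin n) K L)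
    (k m : ℕ) (A : Fin k → (Fin m → L)) (hA : LinearIndependent K A)
    (f : (Submodule.span K (Set.range A) : Submodule K (Fin m → L)) →ₗ[K] (Fin m → L))
    (A' : Fin k → (Fin m → L))
    (hA' : ∀ i, A' i = f ⟨A i, Submodule.subset_span (Set.mem_range_self i)⟩)
    (V U : Fin m → Submodule K (Fin k → K))
    (hV : ∀ j, V j = Submodule.span K
      (Set.range fun t : Fin n => fun i : Fin k => b.repr (A i j) t))
    (hU : ∀ j, U j = Submodule.span K
      (Set.range fun t : Fin n => fun i : Fin k => b.repr (A' i j) t)) :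
    (∀ c : (Submodule.span K (Set.range A) : Submodule K (Fin m → L)),
        hammingNorm (f c) = hammingNorm (c : Fin m → L)) ↔
    (∀ w : Fin k → K,
      ∑ j : Fin m, (Nat.card (V j) : ℝ)⁻¹ * Set.indicator (V j : Set (Fin k → K)) 1 w =
      ∑ j : Fin m, (Nat.card (U j) : ℝ)⁻¹ * Set.indicator (U j : Set (Fin k → K)) 1 w) := by
  classical
  have hRHS : (∀ w : Fin k → K,
      ∑ j : Fin m, (Nat.card (V j) : ℝ)⁻¹ * Set.indicator (V j : Set (Fin k → K)) 1 w =
      ∑ j : Fin m, (Nat.card (U j) : ℝ)⁻¹ * Set.indicator (U j : Set (Fin k → K)) 1 w)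
      ↔ (∀ w, Sfun V w = Sfun U w) := by
    unfold Sfun
    rfl
  rw [hRHS, ← main_equiv V U]
  -- helper: norm computation
  have hmemA : ∀ w : Fin k → K, (∑ i, w i • A i) ∈ Submodule.span K (Set.range A) :=
    fun w => Submodule.sum_mem _ fun i _ =>
      Submodule.smul_mem _ _ (Submodule.subset_span (Set.mem_range_self i))
  have hnormV : ∀ w : Fin k → K, hammingNorm (∑ i, w i • A i)
      = (univ.filter fun j : Fin m => ¬ (w ∈ (dotB K k).orthogonal (V j))).card := by
    intro w
    unfold hammingNorm
    congr 1
    apply Finset.filter_congr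
    intro j _
    rw [not_iff_not.symm, not_ne_iff, not_not]
    rw [zero_iff_mem_orth b A j w, hV j]
  have hnormU : ∀ w : Fin k → K, hammingNorm (∑ i, w i • A' i)
      = (univ.filter fun j : Fin m => ¬ (w ∈ (dotB K k).orthogonal (U j))).card := by
    intro w
    unfold hammingNorm
    congr 1
    apply Finset.filter_congr
    intro j _
    rw [not_iff_not.symm, not_ne_iff, not_not]
    rw [zero_iff_mem_orth b A' j w, hU j]
  have hfc : ∀ w : Fin k → K, f ⟨∑ i, w i • A i, hmemA w⟩ = ∑ i, w i • A' i := by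
    intro w
    have hel : (⟨∑ i, w i • A i, hmemA w⟩ :
        (Submodule.span K (Set.range A) : Submodule K (Fin m → L)))
        = ∑ i, w i • ⟨A i, Submodule.subset_span (Set.mem_range_self i)⟩ := by
      apply Subtype.ext
      simp
    rw [hel, map_sum]
    apply Finset.sum_congr rfl
    intro i _
    rw [map_smul, ← hA' i]
  -- counting equivalence
  have hcount : (∀ c : (Submodule.span K (Set.range A) : Submodule K (Fin m → L)),
        hammingNorm (f c) = hammingNorm (c : Fin m → L))
      ↔ (∀ w : Fin k → K,
          (univ.filter fun j : Fin m => w ∈ (dotB K k).orthogonal (V j)).card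
            = (univ.filter fun j : Fin m => w ∈ (dotB K k).orthogonal (U j)).card) := by
    constructor
    · intro h w
      have := h ⟨∑ i, w i • A i, hmemA w⟩
      rw [hfc w] at this
      simp only at this
      rw [hnormU w, hnormV w] at this
      have c1 := Finset.card_filter_add_card_filter_not
        (s := (univ : Finset (Fin m))) (p := fun j => w ∈ (dotB K k).orthogonal (V j))
      have c2 := Finset.card_filter_add_card_filter_not
        (s := (univ : Finset (Fin m))) (p := fun j => w ∈ (dotB K k).orthogonal (U j))
      omega
    · intro h c
      obtain ⟨w, hw⟩ := (Submodule.mem_span_range_iff_exists_fun K).mp c.2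
      have hcel : c = ⟨∑ i, w i • A i, hmemA w⟩ := by
        apply Subtype.ext
        exact hw.symm
      rw [hcel, hfc w]
      simp only
      rw [hnormU w, hnormV w]
      have c1 := Finset.card_filter_add_card_filter_not
        (s := (univ : Finset (Fin m))) (p := fun j => w ∈ (dotB K k).orthogonal (V j))
      have c2 := Finset.card_filter_add_card_filter_not
        (s := (univ : Finset (Fin m))) (p := fun j => w ∈ (dotB K k).orthogonal (U j))
      have := h w
      omega
  rw [hcount]
  -- Pfun equality ↔ count equality
  have hV' : ∀ (W : Fin m → Submodule K (Fin k → K)) (w : Fin k → K),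
      (∑ j : Fin m, Set.indicator
        (((dotB K k).orthogonal (W j) : Submodule K (Fin k → K)) : Set (Fin k → K)) 1 w)
      = ((univ.filter fun j : Fin m => w ∈ (dotB K k).orthogonal (W j)).card : ℝ) := by
    intro W w
    rw [Finset.card_filter, Nat.cast_sum]
    apply Finset.sum_congr rfl
    intro j _
    by_cases hj : w ∈ (dotB K k).orthogonal (W j) <;> simp [hj, Set.indicator_apply]
  constructor
  · intro h w
    unfold Pfun
    rw [hV' V w, hV' U w]
    exact_mod_cast h w
  · intro h w
    have := h w
    unfold Pfun at this
    rw [hV' V w, hV' U w] at this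
    exact_mod_cast this
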